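/- Suppose f : R^n → R is C^1 with L-Lipschitz gradient, and a quadratic model m(x) = f(x^0) + αᵀ(x−x^0) + (1/2)(x−x^0)ᵀH(x−x^0) interpolates f at the points x^0 + d^i for i = 1,…,m, where the matrix D = [d^1 ⋯ d^m] has full row rank n and ||H|| ≤ κ. Then for all x ∈ B(x^0; Δ_D), |m(x) − f(x^0) − ∇f(x^0)ᵀ(x−x^0)| ≤ ((L+κ)/2 · √n ||(D/Δ_D)†||_1 + κ/2) Δ_D², where Δ_D is the maximum column norm of D and ||·||_1 is the matrix 1-norm (max absolute column sum). -/

import Mathlib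

open Matrix
open scoped RealInnerProductSpace

noncomputable section

abbrev Eu (n : ℕ) := EuclideanSpace ℝ (Fin n)

def IsMP {a b : ℕ} (A : Matrix (Fin a) (Fin b) ℝ) (A' : Matrix (Fin b) (Fin a) ℝ) : Prop :=
  A * A' * A = A ∧ A' * A * A' = A' ∧ (A * A')ᵀ = A * A' ∧ (A' * A)ᵀ = A' * A

def euclNorm {k : ℕ} (v : Fin k → ℝ) : ℝ := Real.sqrt (∑ i, v i ^ 2)

lemma euclNorm_nonneg {k : ℕ} (v : Fin k → ℝ) : 0 ≤ euclNorm v := Real.sqrt_nonneg _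

lemma euclNorm_eq_norm {k : ℕ} (y : Eu k) : euclNorm (fun i => y i) = ‖y‖ := by
  rw [EuclideanSpace.norm_eq, euclNorm]
  congr 1
  refine Finset.sum_congr rfl fun i _ => ?_
  rw [Real.norm_eq_abs, sq_abs]

lemma euclNorm_zero {k : ℕ} : euclNorm (0 : Fin k → ℝ) = 0 := by simp [euclNorm]

lemma euclNorm_smul {k : ℕ} (c : ℝ) (v : Fin k → ℝ) :
    euclNorm (c • v) = |c| * euclNorm v := by
  simp only [euclNorm, Pi.smul_apply, smul_eq_mul, mul_pow]
  rw [← Finset.mul_sum, Real.sqrt_mul (sq_nonneg c), Real.sqrt_sq_eq_abs]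

lemma euclNorm_sq {k : ℕ} (v : Fin k → ℝ) : euclNorm v ^ 2 = ∑ i, v i ^ 2 :=
  Real.sq_sqrt (Finset.sum_nonneg fun i _ => sq_nonneg _)

lemma abs_dot_le {k : ℕ} (v w : Fin k → ℝ) : |v ⬝ᵥ w| ≤ euclNorm v * euclNorm w := by
  calc |v ⬝ᵥ w| ≤ ∑ i, |v i * w i| := Finset.abs_sum_le_sum_abs _ _
    _ = ∑ i, |v i| * |w i| := by simp [abs_mul]
    _ ≤ Real.sqrt (∑ i, |v i| ^ 2) * Real.sqrt (∑ i, |w i| ^ 2) :=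
        Real.sum_mul_le_sqrt_mul_sqrt _ _ _
    _ = euclNorm v * euclNorm w := by simp [euclNorm, sq_abs]

def spNorm {a b : ℕ} (A : Matrix (Fin a) (Fin b) ℝ) : ℝ :=
  ⨆ v : {v : Fin b → ℝ // euclNorm v ≤ 1}, euclNorm (A.mulVec v.1)

def frobNorm {a b : ℕ} (A : Matrix (Fin a) (Fin b) ℝ) : ℝ :=
  Real.sqrt (∑ i, ∑ j, A i j ^ 2)

lemma unit_bound {a b : ℕ} (A : Matrix (Fin a) (Fin b) ℝ) (v : Fin b → ℝ)
    (hv : euclNorm v ≤ 1) : euclNorm (A.mulVec v) ≤ frobNorm A := by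
  rw [euclNorm, frobNorm]
  apply Real.sqrt_le_sqrt
  apply Finset.sum_le_sum
  intro i _
  have h1 : |A.mulVec v i| ≤ euclNorm (fun j => A i j) * euclNorm v := abs_dot_le _ _
  have h2 : euclNorm (fun j => A i j) * euclNorm v ≤ euclNorm (fun j => A i j) * 1 :=
    mul_le_mul_of_nonneg_left hv (euclNorm_nonneg _)
  have h3 : (A.mulVec v i) ^ 2 ≤ (euclNorm (fun j => A i j)) ^ 2 := by
    rw [← sq_abs]
    apply pow_le_pow_left₀ (abs_nonneg _)
    calc |A.mulVec v i| ≤ _ := h1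
      _ ≤ _ := h2
      _ = _ := mul_one _
  calc (A.mulVec v i) ^ 2 ≤ (euclNorm (fun j => A i j)) ^ 2 := h3
    _ = ∑ j, A i j ^ 2 := euclNorm_sq _

lemma spNorm_bdd {a b : ℕ} (A : Matrix (Fin a) (Fin b) ℝ) :
    BddAbove (Set.range fun v : {v : Fin b → ℝ // euclNorm v ≤ 1} =>
      euclNorm (A.mulVec v.1)) := by
  refine ⟨frobNorm A, ?_⟩
  rintro _ ⟨v, rfl⟩
  exact unit_bound A v.1 v.2

lemma spNorm_nonneg {a b : ℕ} (A : Matrix (Fin a) (Fin b) ℝ) : 0 ≤ spNorm A := by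
  have h := le_ciSup (spNorm_bdd A) ⟨0, by simp [euclNorm_zero]⟩
  simpa [euclNorm_zero, spNorm] using h.trans_eq rfl

lemma euclNorm_mulVec_le {a b : ℕ} (A : Matrix (Fin a) (Fin b) ℝ) (u : Fin b → ℝ) :
    euclNorm (A.mulVec u) ≤ spNorm A * euclNorm u := by
  rcases eq_or_lt_of_le (euclNorm_nonneg u) with h0 | hpos
  · have hu : u = 0 := by
      funext i
      have := euclNorm_sq u
      rw [← h0] at this
      have h2 : ∑ i, u i ^ 2 = 0 := by simpa using this.symm
      have := (Finset.sum_eq_zero_iff_of_nonneg (fun i _ => sq_nonneg (u i))).1 h2 i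
        (Finset.mem_univ i)
      exact pow_eq_zero_iff (by norm_num) |>.1 this
    simp [hu, euclNorm_zero, Matrix.mulVec_zero]
  · set c := euclNorm u with hc
    have hne : c ≠ 0 := ne_of_gt hpos
    have hw : euclNorm (c⁻¹ • u) = 1 := by
      rw [euclNorm_smul, abs_of_pos (inv_pos.2 hpos), inv_mul_cancel₀ hne]
    have hle : euclNorm (A.mulVec (c⁻¹ • u)) ≤ spNorm A :=
      le_ciSup (spNorm_bdd A) ⟨c⁻¹ • u, le_of_eq hw⟩
    rw [Matrix.mulVec_smul, euclNorm_smul, abs_of_pos (inv_pos.2 hpos)] at hle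
    calc euclNorm (A.mulVec u) = c * (c⁻¹ * euclNorm (A.mulVec u)) := by
          field_simp
      _ ≤ c * spNorm A := mul_le_mul_of_nonneg_left hle (le_of_lt hpos)
      _ = spNorm A * c := mul_comm _ _

def mat1Norm {a b : ℕ} (A : Matrix (Fin a) (Fin b) ℝ) : ℝ := ⨆ j, ∑ i, |A i j|

lemma col_sum_le_mat1Norm {a b : ℕ} (A : Matrix (Fin a) (Fin b) ℝ) (j : Fin b) :
    ∑ i, |A i j| ≤ mat1Norm A := by
  exact le_ciSup (f := fun j => ∑ i, |A i j|) (Set.Finite.bddAbove (Set.finite_range _)) j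

lemma mat1Norm_nonneg {a b : ℕ} (hb : 0 < b) (A : Matrix (Fin a) (Fin b) ℝ) :
    0 ≤ mat1Norm A := by
  have j : Fin b := ⟨0, hb⟩
  exact le_trans (Finset.sum_nonneg fun i _ => abs_nonneg _) (col_sum_le_mat1Norm A j)

lemma idem_full_rank_eq_one {n : ℕ} (P : Matrix (Fin n) (Fin n) ℝ)
    (hidem : P * P = P) (hr : P.rank = n) : P = 1 := by
  have hsurj : Function.Surjective P.mulVecLin := by
    rw [← LinearMap.range_eq_top]
    apply Submodule.eq_top_of_finrank_eq
    rw [← Matrix.rank, hr]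
    simp [Module.finrank_pi]
  have hfix : ∀ w : Fin n → ℝ, P.mulVec w = w := by
    intro w
    obtain ⟨v, hv⟩ := hsurj w
    have h2 : P.mulVec (P.mulVec v) = P.mulVec v := by
      rw [Matrix.mulVec_mulVec, hidem]
    rw [show P.mulVecLin v = P.mulVec v from rfl] at hv
    rw [hv] at h2
    exact h2
  ext i j
  have := congrFun (hfix (Pi.single j 1)) i
  rw [Matrix.mulVec_single] at this
  simp only [MulOpposite.op_one, one_smul, Matrix.col_apply] at this
  rw [this]
  simp [Matrix.one_apply, Pi.single_apply, eq_comm]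

lemma descent {E : Type*} [NormedAddCommGroup E] [InnerProductSpace ℝ E] [CompleteSpace E]
    (f : E → ℝ) (g : E → E) (L : ℝ)
    (hgrad : ∀ x, HasGradientAt f (g x) x)
    (hlip : ∀ x y, ‖g x - g y‖ ≤ L * ‖x - y‖)
    (x0 d : E) : |f (x0 + d) - f x0 - ⟪g x0, d⟫| ≤ L/2 * ‖d‖^2 := by
  set φ : ℝ → ℝ := fun t => f (x0 + t • d) - f x0 - t * ⟪g x0, d⟫ with hφ
  have hder : ∀ t : ℝ, HasDerivAt φ (⟪g (x0 + t • d) - g x0, d⟫) t := by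
    intro t
    have h1 : HasDerivAt (fun t : ℝ => x0 + t • d) d t := by
      simpa using ((hasDerivAt_id t).smul_const d).const_add x0
    have h2 := ((hgrad (x0 + t • d)).hasFDerivAt.comp_hasDerivAt t h1)
    have h2' : HasDerivAt (fun t : ℝ => f (x0 + t • d)) ⟪g (x0 + t • d), d⟫ t := by
      simp at h2; exact h2
    have h3 : HasDerivAt (fun t : ℝ => f x0 + t * ⟪g x0, d⟫) ⟪g x0, d⟫ t := by
      simpa using ((hasDerivAt_id t).mul_const (⟪g x0, d⟫)).const_add (f x0)
    have := h2'.sub h3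
    simp [hφ, inner_sub_left, sub_sub] at this ⊢; exact this
  have hcont : ContinuousOn φ (Set.Icc (0:ℝ) 1) :=
    Continuous.continuousOn (continuous_iff_continuousAt.2 fun t => (hder t).continuousAt)
  have hf' : ∀ t ∈ Set.Ico (0:ℝ) 1,
      HasDerivWithinAt φ (⟪g (x0 + t • d) - g x0, d⟫) (Set.Ici t) t :=
    fun t _ => (hder t).hasDerivWithinAt
  have ha : ‖φ 0‖ ≤ L * ‖d‖^2 * (0:ℝ)^2/2 := by simp [hφ]
  have hB : ∀ t : ℝ, HasDerivAt (fun t : ℝ => L * ‖d‖^2 * t^2/2) (L * ‖d‖^2 * t) t := by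
    intro t
    have := ((hasDerivAt_pow 2 t).const_mul (L * ‖d‖^2)).div_const 2
    exact this.congr_deriv (by rw [show (2:ℕ) - 1 = 1 from rfl]; push_cast; ring)
  have bound : ∀ t ∈ Set.Ico (0:ℝ) 1,
      ‖(⟪g (x0 + t • d) - g x0, d⟫ : ℝ)‖ ≤ L * ‖d‖^2 * t := by
    intro t ht
    have h1 : |(⟪g (x0 + t • d) - g x0, d⟫ : ℝ)| ≤ ‖g (x0 + t • d) - g x0‖ * ‖d‖ :=
      abs_real_inner_le_norm _ _
    have h2 : ‖g (x0 + t • d) - g x0‖ ≤ L * (t * ‖d‖) := by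
      have := hlip (x0 + t • d) x0
      simpa [norm_smul, abs_of_nonneg ht.1] using this
    calc ‖(⟪g (x0 + t • d) - g x0, d⟫ : ℝ)‖ ≤ ‖g (x0 + t • d) - g x0‖ * ‖d‖ := h1
      _ ≤ (L * (t * ‖d‖)) * ‖d‖ := mul_le_mul_of_nonneg_right h2 (norm_nonneg _)
      _ = L * ‖d‖^2 * t := by ring
  have key := image_norm_le_of_norm_deriv_right_le_deriv_boundary hcont hf' ha hB bound
    (Set.right_mem_Icc.2 (by norm_num))
  simp only [hφ, one_smul, one_mul, Real.norm_eq_abs, one_pow] at key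
  linarith [key]

lemma inner_eq_dot {k : ℕ} (a : Eu k) (b : Fin k → ℝ) :
    ⟪a, (EuclideanSpace.equiv (Fin k) ℝ).symm b⟫ = (fun i => a i) ⬝ᵥ b := by
  simp [PiLp.inner_apply, RCLike.inner_apply, dotProduct, mul_comm]

theorem stmt_8 {n m : ℕ} (hn : 0 < n) (hm : 0 < m)
    (f : Eu n → ℝ) (g : Eu n → Eu n) (L : ℝ) (hL : 0 ≤ L)
    (hgrad : ∀ x, HasGradientAt f (g x) x)
    (hlip : ∀ x y, ‖g x - g y‖ ≤ L * ‖x - y‖)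
    (x0 : Eu n) (α : Fin n → ℝ) (H : Matrix (Fin n) (Fin n) ℝ)
    (D : Matrix (Fin n) (Fin m) ℝ) (hrank : D.rank = n)
    (Δ : ℝ) (hΔ : Δ = ⨆ i, euclNorm fun k => D k i)
    (hinterp : ∀ i, α ⬝ᵥ (fun k => D k i)
        + (1/2) * ((fun k => D k i) ⬝ᵥ H.mulVec (fun k => D k i))
        = f (x0 + (EuclideanSpace.equiv (Fin n) ℝ).symm (fun k => D k i)) - f x0)
    (κ : ℝ) (hκ : spNorm H ≤ κ)
    (Dbp : Matrix (Fin m) (Fin n) ℝ) (hDbp : IsMP (Δ⁻¹ • D) Dbp)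
    (x : Eu n) (hx : ‖x - x0‖ ≤ Δ) :
    |(f x0 + α ⬝ᵥ (x - x0) + (1/2) * ((x - x0) ⬝ᵥ H.mulVec (x - x0)))
        - f x0 - g x0 ⬝ᵥ (x - x0)|
      ≤ ((L + κ)/2 * Real.sqrt n * mat1Norm Dbp + κ/2) * Δ ^ 2 := by
  have hκ0 : 0 ≤ κ := (spNorm_nonneg H).trans hκ
  -- columns bounded by Δ
  haveI : Nonempty (Fin m) := ⟨⟨0, hm⟩⟩
  have hcol : ∀ i, euclNorm (fun k => D k i) ≤ Δ := by
    intro i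
    rw [hΔ]
    exact le_ciSup (f := fun i => euclNorm fun k => D k i)
      (Set.Finite.bddAbove (Set.finite_range _)) i
  -- Δ > 0
  have hΔpos : 0 < Δ := by
    have hD0 : D ≠ 0 := by
      intro h
      rw [h, Matrix.rank_zero] at hrank
      omega
    rw [Ne, ← Matrix.ext_iff] at hD0
    push_neg at hD0
    obtain ⟨k, i, hki⟩ := hD0
    have h1 : 0 < euclNorm (fun k => D k i) := by
      apply Real.sqrt_pos.2
      have h0 : (0:ℝ) < |D k i| ^ 2 := pow_pos (abs_pos.2 hki) 2
      rw [sq_abs] at h0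
      exact lt_of_lt_of_le h0 (Finset.single_le_sum (f := fun k => D k i ^ 2)
        (fun _ _ => sq_nonneg _) (Finset.mem_univ k))
    exact lt_of_lt_of_le h1 (hcol i)
  have hΔne : Δ ≠ 0 := ne_of_gt hΔpos
  -- A * Dbp = 1
  set A : Matrix (Fin n) (Fin m) ℝ := Δ⁻¹ • D with hA
  have hArank : A.rank = n := by
    have h1 : A = (Δ⁻¹ • (1 : Matrix (Fin n) (Fin n) ℝ)) * D := by
      rw [Matrix.smul_mul, Matrix.one_mul]
    have h2 : IsUnit ((Δ⁻¹ • (1 : Matrix (Fin n) (Fin n) ℝ)).det) := by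
      rw [Matrix.det_smul, Matrix.det_one, mul_one]
      exact (isUnit_iff_ne_zero).2 (pow_ne_zero _ (inv_ne_zero hΔne))
    rw [h1, Matrix.rank_mul_eq_right_of_isUnit_det _ _ h2, hrank]
  have hP1 : A * Dbp = 1 := by
    apply idem_full_rank_eq_one
    · calc A * Dbp * (A * Dbp) = (A * Dbp * A) * Dbp := by
            rw [Matrix.mul_assoc (A * Dbp) A Dbp]
      _ = A * Dbp := by rw [hDbp.1]
    · refine le_antisymm ?_ ?_
      · exact (Matrix.rank_le_card_width _).trans (by simp)
      · calc n = A.rank := hArank.symm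
          _ = (A * Dbp * A).rank := by rw [hDbp.1]
          _ ≤ (A * Dbp).rank := Matrix.rank_mul_le_left _ _
  -- the error vector
  set v : Fin n → ℝ := fun k => α k - g x0 k with hv
  -- column bound
  have hcolbound : ∀ i, |v ⬝ᵥ (fun k => D k i)| ≤ (L + κ)/2 * Δ^2 := by
    intro i
    set d : Eu n := (EuclideanSpace.equiv (Fin n) ℝ).symm (fun k => D k i) with hd
    have hnd : ‖d‖ = euclNorm (fun k => D k i) := (euclNorm_eq_norm d).symm
    have h1 : |f (x0 + d) - f x0 - ⟪g x0, d⟫| ≤ L/2 * ‖d‖^2 :=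
      descent f g L hgrad hlip x0 d
    have hinner : ⟪g x0, d⟫ = (fun k => g x0 k) ⬝ᵥ (fun k => D k i) := inner_eq_dot _ _
    have hsub : v ⬝ᵥ (fun k => D k i)
        = α ⬝ᵥ (fun k => D k i) - (fun k => g x0 k) ⬝ᵥ (fun k => D k i) := by
      simp [hv, dotProduct, sub_mul, Finset.sum_sub_distrib]
    have hal : α ⬝ᵥ (fun k => D k i)
        = f (x0 + d) - f x0 - (1/2) * ((fun k => D k i) ⬝ᵥ H.mulVec (fun k => D k i)) := by
      have := hinterp i
      rw [← hd] at this
      linarith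
    have hquad : |(fun k => D k i) ⬝ᵥ H.mulVec (fun k => D k i)| ≤ κ * Δ^2 := by
      have h2 : |(fun k => D k i) ⬝ᵥ H.mulVec (fun k => D k i)|
          ≤ euclNorm (fun k => D k i) * euclNorm (H.mulVec (fun k => D k i)) :=
        abs_dot_le _ _
      have h3 := euclNorm_mulVec_le H (fun k => D k i)
      have h4 := hcol i
      have h5 := euclNorm_nonneg (fun k => D k i)
      have h6 := spNorm_nonneg H
      calc |(fun k => D k i) ⬝ᵥ H.mulVec (fun k => D k i)|
          ≤ euclNorm (fun k => D k i) * euclNorm (H.mulVec (fun k => D k i)) := h2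
        _ ≤ euclNorm (fun k => D k i) * (spNorm H * euclNorm (fun k => D k i)) :=
            mul_le_mul_of_nonneg_left h3 h5
        _ ≤ Δ * (κ * Δ) :=
            mul_le_mul h4 (mul_le_mul hκ h4 h5 hκ0) (mul_nonneg h6 h5) hΔpos.le
        _ = κ * Δ^2 := by ring
    have hnd2 : ‖d‖ ≤ Δ := by rw [hnd]; exact hcol i
    have hnd3 : ‖d‖^2 ≤ Δ^2 := by nlinarith [norm_nonneg d]
    rw [hsub, hal, ← hinner]
    have : f (x0 + d) - f x0 - 1 / 2 * ((fun k => D k i) ⬝ᵥ H.mulVec fun k => D k i)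
        - ⟪g x0, d⟫ = (f (x0 + d) - f x0 - ⟪g x0, d⟫)
        - 1 / 2 * ((fun k => D k i) ⬝ᵥ H.mulVec fun k => D k i) := by ring
    rw [this]
    calc |(f (x0 + d) - f x0 - ⟪g x0, d⟫)
        - 1 / 2 * ((fun k => D k i) ⬝ᵥ H.mulVec fun k => D k i)|
        ≤ |f (x0 + d) - f x0 - ⟪g x0, d⟫|
          + |1 / 2 * ((fun k => D k i) ⬝ᵥ H.mulVec fun k => D k i)| := abs_sub _ _
      _ ≤ L/2 * Δ^2 + 1/2 * (κ * Δ^2) := by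
          refine add_le_add (h1.trans ?_) ?_
          · have := mul_le_mul_of_nonneg_left hnd3 (by linarith : (0:ℝ) ≤ L/2)
            linarith
          · rw [abs_mul]
            have : |(1:ℝ)/2| = 1/2 := by norm_num
            rw [this]
            linarith [hquad]
      _ = (L + κ)/2 * Δ^2 := by ring
  -- w bound
  set w : Fin m → ℝ := v ᵥ* A with hw
  have hwbound : ∀ j, |w j| ≤ (L + κ)/2 * Δ := by
    intro j
    have h1 : w j = Δ⁻¹ * (v ⬝ᵥ (fun k => D k j)) := by
      simp only [hw, hA, Matrix.vecMul, dotProduct, Matrix.smul_apply,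
        smul_eq_mul, Finset.mul_sum]
      exact Finset.sum_congr rfl fun k _ => by ring
    rw [h1, abs_mul, abs_of_pos (inv_pos.2 hΔpos)]
    have := hcolbound j
    calc Δ⁻¹ * |v ⬝ᵥ (fun k => D k j)| ≤ Δ⁻¹ * ((L + κ)/2 * Δ^2) :=
        mul_le_mul_of_nonneg_left this (le_of_lt (inv_pos.2 hΔpos))
      _ = (L + κ)/2 * Δ := by field_simp
  -- v recovered from w
  have hvrec : w ᵥ* Dbp = v := by
    rw [hw, Matrix.vecMul_vecMul, hP1, Matrix.vecMul_one]
  -- component bound on v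
  set M1 := mat1Norm Dbp with hM1
  have hM1nn : 0 ≤ M1 := mat1Norm_nonneg hn Dbp
  set C : ℝ := (L + κ)/2 * Δ * M1 with hC
  have hCnn : 0 ≤ C := by
    apply mul_nonneg (mul_nonneg (by linarith) (le_of_lt hΔpos)) hM1nn
  have hvk : ∀ k, |v k| ≤ C := by
    intro k
    have h1 : v k = ∑ j, w j * Dbp j k := by
      rw [← hvrec]; simp [Matrix.vecMul, dotProduct]
    rw [h1]
    calc |∑ j, w j * Dbp j k| ≤ ∑ j, |w j * Dbp j k| := Finset.abs_sum_le_sum_abs _ _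
      _ = ∑ j, |w j| * |Dbp j k| := by simp [abs_mul]
      _ ≤ ∑ j, ((L + κ)/2 * Δ) * |Dbp j k| := by
          refine Finset.sum_le_sum fun j _ => ?_
          exact mul_le_mul_of_nonneg_right (hwbound j) (abs_nonneg _)
      _ = ((L + κ)/2 * Δ) * ∑ j, |Dbp j k| := (Finset.mul_sum _ _ _).symm
      _ ≤ ((L + κ)/2 * Δ) * M1 := by
          refine mul_le_mul_of_nonneg_left (col_sum_le_mat1Norm Dbp k) ?_
          exact mul_nonneg (by linarith) (le_of_lt hΔpos)
      _ = C := by rw [hC]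
  -- euclNorm v ≤ √n * C
  have hev : euclNorm v ≤ Real.sqrt n * C := by
    rw [euclNorm]
    calc Real.sqrt (∑ k, v k ^ 2) ≤ Real.sqrt (∑ _k : Fin n, C ^ 2) := by
          apply Real.sqrt_le_sqrt
          refine Finset.sum_le_sum fun k _ => ?_
          rw [← sq_abs]
          exact pow_le_pow_left₀ (abs_nonneg _) (hvk k) 2
      _ = Real.sqrt (n * C^2) := by
          rw [Finset.sum_const, Finset.card_univ, Fintype.card_fin, nsmul_eq_mul]
      _ = Real.sqrt n * C := by
          rw [Real.sqrt_mul (by positivity), Real.sqrt_sq hCnn]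
  -- finish
  set u : Fin n → ℝ := fun k => (x - x0) k with hu
  have heu : euclNorm u = ‖x - x0‖ := euclNorm_eq_norm (x - x0)
  have heuΔ : euclNorm u ≤ Δ := by rw [heu]; exact hx
  have heunn : 0 ≤ euclNorm u := euclNorm_nonneg u
  have hsplit : (f x0 + α ⬝ᵥ (x - x0) + (1/2) * ((x - x0) ⬝ᵥ H.mulVec (x - x0)))
      - f x0 - g x0 ⬝ᵥ (x - x0)
      = v ⬝ᵥ u + (1/2) * (u ⬝ᵥ H.mulVec u) := by
    have : v ⬝ᵥ u = α ⬝ᵥ (x - x0) - g x0 ⬝ᵥ (x - x0) := by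
      simp [hv, hu, dotProduct, sub_mul, Finset.sum_sub_distrib]
    rw [this]
    simp only [hu, WithLp.ofLp_sub]
    ring_nf
  rw [hsplit]
  have h1 : |v ⬝ᵥ u| ≤ euclNorm v * euclNorm u := abs_dot_le _ _
  have h2 : |u ⬝ᵥ H.mulVec u| ≤ euclNorm u * (spNorm H * euclNorm u) := by
    calc |u ⬝ᵥ H.mulVec u| ≤ euclNorm u * euclNorm (H.mulVec u) := abs_dot_le _ _
      _ ≤ euclNorm u * (spNorm H * euclNorm u) :=
        mul_le_mul_of_nonneg_left (euclNorm_mulVec_le H u) heunn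
  have h3 : euclNorm v * euclNorm u ≤ (Real.sqrt n * C) * Δ :=
    mul_le_mul hev heuΔ heunn (by positivity)
  have h4 : euclNorm u * (spNorm H * euclNorm u) ≤ Δ * (κ * Δ) := by
    apply mul_le_mul heuΔ _ (mul_nonneg (spNorm_nonneg H) heunn) (le_of_lt hΔpos)
    exact mul_le_mul hκ heuΔ heunn hκ0
  calc |v ⬝ᵥ u + (1/2) * (u ⬝ᵥ H.mulVec u)|
      ≤ |v ⬝ᵥ u| + |(1/2) * (u ⬝ᵥ H.mulVec u)| := abs_add_le _ _
    _ ≤ (Real.sqrt n * C) * Δ + 1/2 * (Δ * (κ * Δ)) := by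
        refine add_le_add (h1.trans h3) ?_
        rw [abs_mul]
        have : |(1:ℝ)/2| = 1/2 := by norm_num
        rw [this]
        linarith [h2.trans h4]
    _ = ((L + κ)/2 * Real.sqrt n * M1 + κ/2) * Δ ^ 2 := by rw [hC]; ring
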